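/- Suppose G is connected. A nonzero class x ∈ Λ(G) is irreducible if and only if there exists a subset R ⊆ V with R ≠ ∅ and R ≠ V such that x equals the class of the indicator function [R] and both the induced multigraph on R and the induced multigraph on V∖R are connected. -/

import Mathlib

open Finset

/-- The subgroup of constant functions in `V → ℤ`. -/
def constSub (V : Type) [Fintype V] : AddSubgroup (V → ℤ) where
  carrier := {f | ∃ c : ℤ, ∀ v, f v = c}
  zero_mem' := ⟨0, fun _ => rfl⟩
  add_mem' := by
    rintro f g ⟨c, hc⟩ ⟨d, hd⟩
    exact ⟨c + d, fun v => by simp [hc v, hd v]⟩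
  neg_mem' := by
    rintro f ⟨c, hc⟩
    exact ⟨-c, fun v => by simp [hc v]⟩

/-- The graph lattice `Λ(G)`: functions `V → ℤ` modulo constants. -/
abbrev GrLat (V : Type) [Fintype V] := (V → ℤ) ⧸ constSub V

/-- The pairing `B(b,c) = (1/2) ∑_{u,v ∈ V} (b v - b u)(c v - c u) e(u,v)`. -/
def Bq {V : Type} [Fintype V] (e : V → V → ℕ) (b c : V → ℤ) : ℚ :=
  (1 / 2 : ℚ) * ∑ u : V, ∑ v : V,
    ((b v - b u : ℤ) : ℚ) * ((c v - c u : ℤ) : ℚ) * (e u v : ℚ)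

lemma Bq_well {V : Type} [Fintype V] (e : V → V → ℕ)
    (a₁ b₁ a₂ b₂ : V → ℤ)
    (h₁ : @Setoid.r _ (QuotientAddGroup.leftRel (constSub V)) a₁ a₂)
    (h₂ : @Setoid.r _ (QuotientAddGroup.leftRel (constSub V)) b₁ b₂) :
    Bq e a₁ b₁ = Bq e a₂ b₂ := by
  rw [QuotientAddGroup.leftRel_apply] at h₁ h₂
  obtain ⟨c, hc⟩ := h₁
  obtain ⟨d, hd⟩ := h₂
  unfold Bq
  congr 1
  refine Finset.sum_congr rfl fun u _ => Finset.sum_congr rfl fun v _ => ?_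
  have h1 : a₂ v - a₂ u = a₁ v - a₁ u := by
    have hu := hc u; have hv := hc v
    simp only [Pi.add_apply, Pi.neg_apply] at hu hv
    omega
  have h2 : b₂ v - b₂ u = b₁ v - b₁ u := by
    have hu := hd u; have hv := hd v
    simp only [Pi.add_apply, Pi.neg_apply] at hu hv
    omega
  rw [h1, h2]

/-- The pairing `B` descended to the graph lattice. -/
def BL {V : Type} [Fintype V] (e : V → V → ℕ) (x y : GrLat V) : ℚ :=
  Quotient.liftOn₂ x y (Bq e) (Bq_well e)

/-- Indicator function of a subset `R ⊆ V`. -/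
def ind {V : Type} [Fintype V] [DecidableEq V] (R : Finset V) : V → ℤ :=
  fun v => if v ∈ R then 1 else 0

/-- The class of the indicator function `[R]` in the graph lattice. -/
def cls {V : Type} [Fintype V] [DecidableEq V] (R : Finset V) : GrLat V :=
  QuotientAddGroup.mk (ind R)

/-- A class `x ∈ Λ(G)` is irreducible if it cannot be written `x = y + z`
with `y, z` nonzero and `B(y,z) ≥ 0`. -/
def IrredGL {V : Type} [Fintype V] (e : V → V → ℕ) (x : GrLat V) : Prop :=
  ¬ ∃ y z : GrLat V, y ≠ 0 ∧ z ≠ 0 ∧ x = y + z ∧ 0 ≤ BL e y z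

/-- The induced multigraph on a subset `W ⊆ V` is connected. -/
def IndConn {V : Type} [Fintype V] (e : V → V → ℕ) (W : Finset V) : Prop :=
  (SimpleGraph.fromRel fun u v : {x // x ∈ W} => 0 < e u.1 v.1).Connected

set_option linter.unusedSectionVars false
set_option maxHeartbeats 1000000

set_option linter.unusedSectionVars false
section Aux
variable {V : Type} [Fintype V] [DecidableEq V]

lemma mk_eq_zero_iff' (f : V → ℤ) :
    (QuotientAddGroup.mk f : GrLat V) = 0 ↔ ∃ c, ∀ v, f v = c := by
  rw [QuotientAddGroup.eq_zero_iff]; rfl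

lemma cls_ne_zero (R : Finset V) (h1 : R.Nonempty) (h2 : R ≠ Finset.univ) :
    (cls R : GrLat V) ≠ 0 := by
  intro h
  rw [cls, mk_eq_zero_iff'] at h
  obtain ⟨c, hc⟩ := h
  obtain ⟨u, hu⟩ := h1
  obtain ⟨v, hv⟩ : ∃ v, v ∉ R := by
    by_contra h; push_neg at h
    exact h2 (Finset.eq_univ_iff_forall.mpr h)
  have h1 := hc u; have h2 := hc v
  simp [ind, hu, hv] at h1 h2
  omega

/-- constancy propagation along a connected induced subgraph -/
lemma const_of_indConn (e : V → V → ℕ) (W : Finset V) (hW : IndConn e W)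
    (b : V → ℤ) (h : ∀ u ∈ W, ∀ v ∈ W, 0 < e u v → b u = b v) :
    ∀ u ∈ W, ∀ v ∈ W, b u = b v := by
  have H : ∀ x y : {v // v ∈ W},
      (SimpleGraph.fromRel fun u v : {x // x ∈ W} => 0 < e u.1 v.1).Reachable x y →
      b x.1 = b y.1 := by
    intro x y hr
    obtain ⟨w⟩ := hr
    induction w with
    | nil => rfl
    | cons hadj p ih =>
      rename_i a c d
      have hac : b a.1 = b c.1 := by
        rcases hadj with ⟨hne, h1 | h1⟩
        · exact h a.1 a.2 c.1 c.2 h1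
        · exact (h c.1 c.2 a.1 a.2 h1).symm
      omega
  intro u hu v hv
  exact H ⟨u, hu⟩ ⟨v, hv⟩ (hW.preconnected _ _)

/-- existence of a crossing edge for a proper nonempty subset, from global connectivity -/
lemma exists_cross (e : V → V → ℕ) (hsymm : ∀ u v, e u v = e v u)
    (hconn : (SimpleGraph.fromRel fun u v => 0 < e u v).Connected)
    (R : Finset V) (u₀ : V) (hu₀ : u₀ ∈ R) (v₀ : V) (hv₀ : v₀ ∉ R) :
    ∃ u ∈ R, ∃ v, v ∉ R ∧ 0 < e u v := by
  have H : ∀ x y : V, (SimpleGraph.fromRel fun u v => 0 < e u v).Reachable x y →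
      x ∈ R → y ∉ R → ∃ u ∈ R, ∃ v, v ∉ R ∧ 0 < e u v := by
    intro x y hr
    obtain ⟨w⟩ := hr
    induction w with
    | nil => intro hx hy; exact absurd hx hy
    | cons hadj p ih =>
      rename_i a c d
      intro ha hd
      by_cases hc : c ∈ R
      · exact ih hc hd
      · refine ⟨a, ha, c, hc, ?_⟩
        rcases hadj with ⟨hne, h1 | h1⟩
        · exact h1
        · rw [hsymm]; exact h1
  exact H u₀ v₀ (hconn.preconnected _ _) hu₀ hv₀

end Aux

section Aux2
variable {V : Type} [Fintype V] [DecidableEq V]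

/-- non-connected induced graph on a nonempty set splits -/
lemma partition_of_not_indConn (e : V → V → ℕ) (hloop : ∀ v, e v v = 0)
    (W : Finset V) (hWne : W.Nonempty) (hnc : ¬ IndConn e W) :
    ∃ R₁ R₂ : Finset V, R₁.Nonempty ∧ R₂.Nonempty ∧ R₁ ∪ R₂ = W ∧
      Disjoint R₁ R₂ ∧ ∀ u ∈ R₁, ∀ v ∈ R₂, e u v = 0 := by
  classical
  obtain ⟨u₀, hu₀⟩ := hWne
  set G := SimpleGraph.fromRel fun u v : {x // x ∈ W} => 0 < e u.1 v.1 with hG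
  set p : V → Prop := fun v => ∃ hv : v ∈ W, G.Reachable ⟨u₀, hu₀⟩ ⟨v, hv⟩ with hp
  set R₁ : Finset V := W.filter p with hR₁
  set R₂ : Finset V := W \ R₁ with hR₂
  have hmem1 : ∀ v, v ∈ R₁ ↔ ∃ hv : v ∈ W, G.Reachable ⟨u₀, hu₀⟩ ⟨v, hv⟩ := by
    intro v; simp [hR₁, hp, Finset.mem_filter]
  have hne1 : R₁.Nonempty := ⟨u₀, (hmem1 u₀).mpr ⟨hu₀, SimpleGraph.Reachable.refl _⟩⟩
  have hne2 : R₂.Nonempty := by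
    by_contra h
    rw [Finset.not_nonempty_iff_eq_empty, Finset.sdiff_eq_empty_iff_subset] at h
    apply hnc
    rw [IndConn, SimpleGraph.connected_iff]
    refine ⟨?_, ⟨⟨u₀, hu₀⟩⟩⟩
    intro x y
    have hx : G.Reachable ⟨u₀, hu₀⟩ x := by
      obtain ⟨hx', hr⟩ := (hmem1 x.1).mp (h x.2)
      exact hr
    have hy : G.Reachable ⟨u₀, hu₀⟩ y := by
      obtain ⟨hy', hr⟩ := (hmem1 y.1).mp (h y.2)
      exact hr
    exact hx.symm.trans hy
  refine ⟨R₁, R₂, hne1, hne2, ?_, ?_, ?_⟩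
  · rw [hR₂, Finset.union_sdiff_of_subset (Finset.filter_subset _ _)]
  · exact Finset.disjoint_sdiff
  · intro u hu v hv
    by_contra hpos0
    have hpos : 0 < e u v := Nat.pos_of_ne_zero hpos0
    have huW : u ∈ W := Finset.filter_subset _ _ hu
    have hvW : v ∈ W := (Finset.mem_sdiff.mp hv).1
    have hvn : v ∉ R₁ := (Finset.mem_sdiff.mp hv).2
    apply hvn
    obtain ⟨_, hr⟩ := (hmem1 u).mp hu
    have hne : u ≠ v := by intro h; rw [h, hloop] at hpos; omega
    have hadj : G.Adj ⟨u, huW⟩ ⟨v, hvW⟩ := by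
      rw [hG]
      refine ⟨?_, Or.inl hpos⟩
      simp [Subtype.ext_iff, hne]
    exact (hmem1 v).mpr ⟨hvW, hr.trans hadj.reachable⟩

/-- nonnegativity of Bq from termwise sign -/
lemma Bq_nonneg (e : V → V → ℕ) (b c : V → ℤ)
    (h : ∀ u v, 0 < e u v → 0 ≤ (b v - b u) * (c v - c u)) :
    0 ≤ Bq e b c := by
  unfold Bq
  have : 0 ≤ ∑ u : V, ∑ v : V,
      ((b v - b u : ℤ) : ℚ) * ((c v - c u : ℤ) : ℚ) * (e u v : ℚ) := by
    refine Finset.sum_nonneg fun u _ => Finset.sum_nonneg fun v _ => ?_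
    rcases Nat.eq_zero_or_pos (e u v) with h0 | h0
    · simp [h0]
    · have := h u v h0
      have h1 : (0 : ℚ) ≤ ((b v - b u : ℤ) : ℚ) * ((c v - c u : ℤ) : ℚ) := by
        rw [← Int.cast_mul]; exact_mod_cast this
      positivity
  linarith

/-- zero extraction: termwise nonpositive + total nonneg ⇒ each edge term vanishes -/
lemma Bq_eq_zero_terms (e : V → V → ℕ) (b c : V → ℤ)
    (h : ∀ u v, 0 < e u v → (b v - b u) * (c v - c u) ≤ 0)
    (hB : 0 ≤ Bq e b c) :
    ∀ u v, 0 < e u v → (b v - b u) * (c v - c u) = 0 := by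
  have hterm : ∀ u : V, ∀ v : V,
      ((b v - b u : ℤ) : ℚ) * ((c v - c u : ℤ) : ℚ) * (e u v : ℚ) ≤ 0 := by
    intro u v
    rcases Nat.eq_zero_or_pos (e u v) with h0 | h0
    · simp [h0]
    · have := h u v h0
      have h1 : ((b v - b u : ℤ) : ℚ) * ((c v - c u : ℤ) : ℚ) ≤ 0 := by
        rw [← Int.cast_mul]; exact_mod_cast this
      have h2 : (0:ℚ) ≤ (e u v : ℚ) := by positivity
      exact mul_nonpos_of_nonpos_of_nonneg h1 h2
  have hsle : ∑ u : V, ∑ v : V,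
      ((b v - b u : ℤ) : ℚ) * ((c v - c u : ℤ) : ℚ) * (e u v : ℚ) ≤ 0 :=
    Finset.sum_nonpos fun u _ => Finset.sum_nonpos fun v _ => hterm u v
  have hsge : 0 ≤ ∑ u : V, ∑ v : V,
      ((b v - b u : ℤ) : ℚ) * ((c v - c u : ℤ) : ℚ) * (e u v : ℚ) := by
    unfold Bq at hB; linarith
  have hs0 := le_antisymm hsle hsge
  have hinner := (Finset.sum_eq_zero_iff_of_nonpos
    (fun u _ => Finset.sum_nonpos fun v _ => hterm u v)).mp hs0
  intro u v hpos
  have := (Finset.sum_eq_zero_iff_of_nonpos (fun v _ => hterm u v)).mp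
    (hinner u (Finset.mem_univ u)) v (Finset.mem_univ v)
  have hene : (e u v : ℚ) ≠ 0 := by positivity
  have := mul_eq_zero.mp this
  rcases this with h' | h'
  · rw [← Int.cast_mul] at h'
    exact_mod_cast h'
  · exact absurd h' hene

end Aux2

section Aux3
variable {V : Type} [Fintype V] [DecidableEq V]

lemma cls_compl_eq_neg (R : Finset V) : (cls Rᶜ : GrLat V) = - cls R := by
  rw [cls, cls, eq_neg_iff_add_eq_zero, ← QuotientAddGroup.mk_add, mk_eq_zero_iff']
  refine ⟨1, fun v => ?_⟩
  by_cases hv : v ∈ R <;> simp [ind, Pi.add_apply, hv]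

lemma BL_neg_neg (e : V → V → ℕ) (y z : GrLat V) : BL e (-y) (-z) = BL e y z := by
  obtain ⟨b, rfl⟩ := QuotientAddGroup.mk_surjective y
  obtain ⟨c, rfl⟩ := QuotientAddGroup.mk_surjective z
  rw [← QuotientAddGroup.mk_neg, ← QuotientAddGroup.mk_neg]
  show Bq e (-b) (-c) = Bq e b c
  unfold Bq
  congr 1
  refine Finset.sum_congr rfl fun u _ => Finset.sum_congr rfl fun v _ => ?_
  simp only [Pi.neg_apply]
  push_cast
  ring

lemma irred_neg (e : V → V → ℕ) (x : GrLat V) (h : IrredGL e x) : IrredGL e (-x) := by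
  rintro ⟨y, z, hy, hz, hxyz, hB⟩
  refine h ⟨-y, -z, neg_ne_zero.mpr hy, neg_ne_zero.mpr hz, ?_, ?_⟩
  · have := congrArg Neg.neg hxyz
    simpa [neg_add, add_comm] using this
  · rwa [BL_neg_neg]

/-- if `cls R` is irreducible (R proper nonempty), the induced graph on R is connected -/
lemma indConn_of_irred (e : V → V → ℕ) (hsymm : ∀ u v, e u v = e v u)
    (hloop : ∀ v, e v v = 0)
    (R : Finset V) (hRne : R.Nonempty) (hRu : R ≠ Finset.univ)
    (hirr : IrredGL e (cls R)) : IndConn e R := by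
  by_contra hnc
  obtain ⟨R₁, R₂, hne1, hne2, hunion, hdisj, hedge⟩ :=
    partition_of_not_indConn e hloop R hRne hnc
  have hR1u : R₁ ≠ Finset.univ := by
    intro h
    obtain ⟨v, hv⟩ := hne2
    exact (Finset.disjoint_left.mp hdisj (h ▸ Finset.mem_univ v)) hv
  have hR2u : R₂ ≠ Finset.univ := by
    intro h
    obtain ⟨v, hv⟩ := hne1
    exact (Finset.disjoint_left.mp hdisj hv) (h ▸ Finset.mem_univ v)
  refine hirr ⟨cls R₁, cls R₂, cls_ne_zero R₁ hne1 hR1u, cls_ne_zero R₂ hne2 hR2u, ?_, ?_⟩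
  · rw [cls, cls, cls, ← QuotientAddGroup.mk_add]
    congr 1
    funext v
    have : v ∈ R ↔ v ∈ R₁ ∨ v ∈ R₂ := by rw [← hunion]; simp
    have hnot : ¬ (v ∈ R₁ ∧ v ∈ R₂) := fun ⟨h1, h2⟩ => (Finset.disjoint_left.mp hdisj h1) h2
    by_cases h1 : v ∈ R₁ <;> by_cases h2 : v ∈ R₂ <;>
      simp [ind, Pi.add_apply, h1, h2, this.mpr, *] <;> tauto
  · have : Bq e (ind R₁) (ind R₂) = 0 := by
      unfold Bq
      rw [Finset.sum_eq_zero, mul_zero]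
      intro u _
      rw [Finset.sum_eq_zero]
      intro v _
      rcases Nat.eq_zero_or_pos (e u v) with h0 | h0
      · simp [h0]
      have h1 : (ind R₁ v - ind R₁ u) * (ind R₂ v - ind R₂ u) = 0 := by
        by_cases hu1 : u ∈ R₁ <;> by_cases hv1 : v ∈ R₁ <;>
          by_cases hu2 : u ∈ R₂ <;> by_cases hv2 : v ∈ R₂ <;>
          simp [ind, hu1, hv1, hu2, hv2] <;>
          first
          | (exact absurd ((Finset.disjoint_left.mp hdisj) hu1) (fun h => h hu2))
          | (exact absurd ((Finset.disjoint_left.mp hdisj) hv1) (fun h => h hv2))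
          | (exact absurd (hedge u hu1 v hv2) (by omega))
          | (exact absurd (hedge v hv1 u hu2) (by rw [hsymm u v] at h0; omega))
      have : ((ind R₁ v - ind R₁ u : ℤ) : ℚ) * ((ind R₂ v - ind R₂ u : ℤ) : ℚ) = 0 := by
        rw [← Int.cast_mul, h1, Int.cast_zero]
      rw [mul_eq_zero] at this
      rcases this with h' | h'
      · rw [mul_assoc, mul_comm, mul_assoc]
        rw [h']
        ring
      · rw [h']
        ring
    show 0 ≤ BL e (cls R₁) (cls R₂)
    rw [cls, cls]
    show 0 ≤ Bq e (ind R₁) (ind R₂)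
    rw [this]

end Aux3


/-- For a connected multigraph `G`, a nonzero class `x ∈ Λ(G)` is irreducible
if and only if `x = [R]` for some `R ⊆ V`, `R ≠ ∅`, `R ≠ V`, such that both
the induced multigraphs on `R` and on `V ∖ R` are connected. -/
theorem stmt4 {V : Type} [Fintype V] [Nonempty V] [DecidableEq V]
    (e : V → V → ℕ) (hsymm : ∀ u v, e u v = e v u) (hloop : ∀ v, e v v = 0)
    (hconn : (SimpleGraph.fromRel fun u v => 0 < e u v).Connected)
    (x : GrLat V) (hx : x ≠ 0) :
    IrredGL e x ↔ ∃ R : Finset V, R ≠ ∅ ∧ R ≠ Finset.univ ∧ x = cls R ∧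
      IndConn e R ∧ IndConn e Rᶜ := by
  constructor
  · intro hirr
    obtain ⟨b, rfl⟩ := QuotientAddGroup.mk_surjective x
    obtain ⟨v₀, -, hmax⟩ := Finset.exists_max_image Finset.univ b
      ⟨Classical.arbitrary V, Finset.mem_univ _⟩
    set M := b v₀ with hM
    obtain ⟨R, hmemR⟩ : ∃ R : Finset V, ∀ v, v ∈ R ↔ b v = M :=
      ⟨Finset.univ.filter (fun v => b v = M), fun v => by simp⟩
    have hRne : R.Nonempty := ⟨v₀, (hmemR v₀).mpr rfl⟩
    have hRu : R ≠ Finset.univ := by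
      intro h
      apply hx
      rw [mk_eq_zero_iff']
      exact ⟨M, fun v => (hmemR v).mp (h ▸ Finset.mem_univ v)⟩
    have hstep : (QuotientAddGroup.mk b : GrLat V) = cls R := by
      by_contra hne
      have hz : (QuotientAddGroup.mk b : GrLat V) - cls R ≠ 0 := sub_ne_zero.mpr hne
      apply hirr
      refine ⟨cls R, QuotientAddGroup.mk b - cls R, cls_ne_zero R hRne hRu, hz, by abel, ?_⟩
      have hzrep : (QuotientAddGroup.mk b : GrLat V) - cls R =
          QuotientAddGroup.mk (b - ind R) := by
        rw [cls]; simp [QuotientAddGroup.mk_sub]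
      rw [hzrep]
      show 0 ≤ Bq e (ind R) (b - ind R)
      apply Bq_nonneg
      intro u v _
      have hbu : b u ≤ M := hmax u (Finset.mem_univ u)
      have hbv : b v ≤ M := hmax v (Finset.mem_univ v)
      by_cases hu : u ∈ R <;> by_cases hv : v ∈ R
      · simp [ind, hu, hv]
      · have e1 : b u = M := (hmemR u).mp hu
        have e2 : b v ≠ M := fun h => hv ((hmemR v).mpr h)
        simp [ind, hu, hv]
        omega
      · have e1 : b v = M := (hmemR v).mp hv
        have e2 : b u ≠ M := fun h => hu ((hmemR u).mpr h)
        simp [ind, hu, hv]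
        omega
      · simp [ind, hu, hv]
    have hirr' : IrredGL e (cls R) := hstep ▸ hirr
    refine ⟨R, Finset.nonempty_iff_ne_empty.mp hRne, hRu, hstep, ?_, ?_⟩
    · exact indConn_of_irred e hsymm hloop R hRne hRu hirr'
    · refine indConn_of_irred e hsymm hloop Rᶜ ?_ ?_ ?_
      · obtain ⟨v, hv⟩ : ∃ v, v ∉ R := by
          by_contra h; push_neg at h
          exact hRu (Finset.eq_univ_iff_forall.mpr h)
        exact ⟨v, Finset.mem_compl.mpr hv⟩
      · intro h
        obtain ⟨u, hu⟩ := hRne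
        have := h ▸ Finset.mem_univ u
        exact (Finset.mem_compl.mp this) hu
      · rw [cls_compl_eq_neg]
        exact irred_neg e _ hirr'
  · rintro ⟨R, hRe, hRu, rfl, hcR, hcRc⟩
    rintro ⟨y, z, hy, hz, hxyz, hB⟩
    obtain ⟨b, rfl⟩ := QuotientAddGroup.mk_surjective y
    have hzrep : z = QuotientAddGroup.mk (ind R - b) := by
      have h1 : z = cls R - QuotientAddGroup.mk b := by rw [hxyz]; abel
      rw [h1, cls]; simp [QuotientAddGroup.mk_sub]
    rw [hzrep] at hB
    have hB' : 0 ≤ Bq e b (ind R - b) := hB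
    have hkey : ∀ n m : ℤ, -1 ≤ m → m ≤ 1 → n * (m - n) ≤ 0 := by
      intro n m h1 h2
      rcases lt_trichotomy n 0 with h | h | h
      · nlinarith
      · simp [h]
      · nlinarith
    have hall := Bq_eq_zero_terms e b (ind R - b) (fun u v _ => by
      have hm1 : (-1 : ℤ) ≤ ind R v - ind R u := by
        by_cases hu : u ∈ R <;> by_cases hv : v ∈ R <;> simp [ind, hu, hv]
      have hm2 : ind R v - ind R u ≤ 1 := by
        by_cases hu : u ∈ R <;> by_cases hv : v ∈ R <;> simp [ind, hu, hv]
      have := hkey (b v - b u) (ind R v - ind R u) hm1 hm2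
      calc (b v - b u) * ((ind R - b) v - (ind R - b) u)
          = (b v - b u) * ((ind R v - ind R u) - (b v - b u)) := by
            simp only [Pi.sub_apply]; ring
        _ ≤ 0 := this) hB'
    -- constancy on R
    have hconst : ∀ (W : Finset V), IndConn e W →
        (∀ u ∈ W, ∀ v ∈ W, ind R u = ind R v) → ∀ u ∈ W, ∀ v ∈ W, b u = b v := by
      intro W hW hind
      apply const_of_indConn e W hW
      intro u hu v hv hpos
      have h0 := hall u v hpos
      have h1 : (ind R - b) v - (ind R - b) u = -(b v - b u) := by
        simp only [Pi.sub_apply, hind u hu v hv]; ring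
      rw [h1] at h0
      have : (b v - b u) * (b v - b u) = 0 := by linarith [h0]
      have := mul_self_eq_zero.mp this
      omega
    obtain ⟨u₀, hu₀⟩ := Finset.nonempty_iff_ne_empty.mpr hRe
    obtain ⟨w₀, hw₀⟩ : ∃ v, v ∉ R := by
      by_contra h; push_neg at h
      exact hRu (Finset.eq_univ_iff_forall.mpr h)
    have hα : ∀ u ∈ R, b u = b u₀ := fun u hu =>
      hconst R hcR (fun a ha c hc => by simp [ind, ha, hc]) u hu u₀ hu₀
    have hβ : ∀ v, v ∉ R → b v = b w₀ := by
      intro v hv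
      have := hconst Rᶜ hcRc (fun a ha c hc => by
        simp [ind, Finset.mem_compl.mp ha, Finset.mem_compl.mp hc])
        v (Finset.mem_compl.mpr hv) w₀ (Finset.mem_compl.mpr hw₀)
      exact this
    obtain ⟨u, hu, v, hv, hpos⟩ := exists_cross e hsymm hconn R u₀ hu₀ w₀ hw₀
    have h0 := hall u v hpos
    have hbu : b u = b u₀ := hα u hu
    have hbv : b v = b w₀ := hβ v hv
    have hindu : ind R u = 1 := by simp [ind, hu]
    have hindv : ind R v = 0 := by simp [ind, hv]
    rw [Pi.sub_apply, Pi.sub_apply, hindu, hindv, hbu, hbv] at h0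
    rcases mul_eq_zero.mp h0 with h' | h'
    · -- b constant
      apply hy
      rw [mk_eq_zero_iff']
      refine ⟨b u₀, fun w => ?_⟩
      by_cases hw : w ∈ R
      · exact hα w hw
      · rw [hβ w hw]; omega
    · -- ind R - b constant
      apply hz
      rw [hzrep, mk_eq_zero_iff']
      refine ⟨1 - b u₀, fun w => ?_⟩
      by_cases hw : w ∈ R
      · simp [ind, Pi.sub_apply, hw, hα w hw]
      · simp only [Pi.sub_apply, hβ w hw]
        have : ind R w = 0 := by simp [ind, hw]
        omega
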